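/- Let γ ∈ H²(𝕋¹; ℝ³) have unit speed, and define the curvature maximal function κ*_γ(x) := sup_{0<ℓ<π} (1/2ℓ)∫_{x-ℓ}^{x+ℓ} |γ''(z)| dz. If δ(x,y) is defined by |γ(x)-γ(y)|² = (1-δ(x,y))ϑ(x-y)², then δ(x,y) ≤ ϑ(x-y)·κ*_γ(x). -/

import Mathlib

open MeasureTheory Real

/-- Geodesic distance on the torus `𝕋¹ = [-π,π]` with endpoints identified. -/
noncomputable def vartheta (z : ℝ) : ℝ :=
  |z - 2 * π * ((round (z / (2 * π)) : ℤ) : ℝ)|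

open intervalIntegral Topology Filter
open scoped RealInnerProductSpace

section Core

variable {E : Type*} [NormedAddCommGroup E] [InnerProductSpace ℝ E] [CompleteSpace E]

lemma interval_inner_pull {g : ℝ → E} {a b : ℝ} (hab : a ≤ b)
    (hg : IntervalIntegrable g volume a b) (c : E) :
    ⟪c, ∫ s in a..b, g s⟫ = ∫ s in a..b, ⟪c, g s⟫ := by
  rw [intervalIntegral.integral_of_le hab, intervalIntegral.integral_of_le hab]
  exact (integral_inner (𝕜 := ℝ) hg.1 c).symm

set_option maxHeartbeats 1000000 in
lemma core_est (g : ℝ → E) (f : ℝ → ℝ) (x t M : ℝ) (ht : 0 ≤ t) (hM0 : 0 ≤ M)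
    (hg : Continuous g) (hgu : ∀ s, ‖g s‖ = 1)
    (hfi : ∀ a b : ℝ, IntervalIntegrable f volume a b)
    (hf0 : ∀ z, 0 ≤ f z)
    (hF : ∀ a b : ℝ, x ≤ a → a ≤ b → b ≤ x + t → ‖g b - g a‖ ≤ ∫ z in a..b, f z)
    (hM : ∀ r : ℝ, 0 ≤ r → r ≤ t → (∫ z in (x - r)..(x + r), f z) ≤ 2 * r * M) :
    t ^ 2 - ‖∫ s in x..(x + t), g s‖ ^ 2 ≤ t * M * t ^ 2 := by
  set T := x + t with hT
  have hxT : x ≤ T := by rw [hT]; linarith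
  set F : ℝ → ℝ := fun s => ∫ z in x..s, f z with hFdef
  have hFc : Continuous F := intervalIntegral.continuous_primitive hfi x
  set Φ : ℝ → ℝ := fun s => ∫ z in x..s, F z with hΦdef
  have hΦc : Continuous Φ :=
    intervalIntegral.continuous_primitive (fun a b => hFc.intervalIntegrable a b) x
  set v : E := ∫ s in x..T, g s with hv
  have hgi : ∀ a b : ℝ, IntervalIntegrable g volume a b := fun a b => hg.intervalIntegrable a b
  have hFsub : ∀ a b : ℝ, F b - F a = ∫ z in a..b, f z := fun a b =>
    intervalIntegral.integral_interval_sub_left (hfi x b) (hfi x a)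
  have hΦsub : ∀ a b : ℝ, Φ b - Φ a = ∫ z in a..b, F z := fun a b =>
    intervalIntegral.integral_interval_sub_left (hFc.intervalIntegrable x b)
      (hFc.intervalIntegrable x a)
  have hF0 : ∀ a, x ≤ a → 0 ≤ F a := fun a ha =>
    intervalIntegral.integral_nonneg ha (fun u _ => hf0 u)
  have hFle : ∀ a, x ≤ a → a ≤ T → F a ≤ 2 * (a - x) * M := by
    intro a hxa haT
    have h1 : F a ≤ ∫ z in (x - (a - x))..(x + (a - x)), f z := by
      apply intervalIntegral.integral_mono_interval (by linarith) hxa (by linarith)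
        (Filter.Eventually.of_forall fun z => hf0 z) (hfi _ _)
    refine h1.trans (hM (a - x) (by linarith) ?_)
    rw [hT] at haT; linarith
  set K : ℝ → ℝ := fun a => (2 * (a - x) - t) * F a + (Φ T - 2 * Φ a) with hK
  have hc1 : Continuous fun a : ℝ => (2 * (a - x) - t) * F a :=
    ((continuous_const.mul (continuous_id.sub continuous_const)).sub continuous_const).mul hFc
  have hc2 : Continuous fun a : ℝ => (a - x) * F a :=
    (continuous_id.sub continuous_const).mul hFc
  have hKc : Continuous K := hc1.add (continuous_const.sub (continuous_const.mul hΦc))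
  have hTx : T - x = t := by rw [hT]; ring
  -- Step A: identity
  have hA : t ^ 2 - ‖v‖ ^ 2 = ∫ a in x..T, (t - ⟪g a, v⟫) := by
    rw [intervalIntegral.integral_sub intervalIntegrable_const
      ((hg.inner continuous_const).intervalIntegrable x T)]
    rw [intervalIntegral.integral_const]
    have h2 : ∫ a in x..T, ⟪g a, v⟫ = ‖v‖ ^ 2 := by
      have h1 : ∀ a, ⟪g a, v⟫ = ⟪v, g a⟫ := fun a => real_inner_comm _ _
      simp_rw [h1]
      rw [← interval_inner_pull hxT (hgi x T), ← hv, real_inner_self_eq_norm_sq]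
    rw [h2, hTx, smul_eq_mul]
    ring
  -- Step B: pointwise bound
  have hB : ∀ a ∈ Set.Icc x T, t - ⟪g a, v⟫ ≤ K a := by
    intro a ha
    have hHa : t - ⟪g a, v⟫ = ∫ b in x..T, (1 - ⟪g a, g b⟫) := by
      rw [intervalIntegral.integral_sub intervalIntegrable_const
        ((continuous_const.inner hg).intervalIntegrable x T)]
      rw [intervalIntegral.integral_const, interval_inner_pull hxT (hgi x T), hTx,
        smul_eq_mul, mul_one]
    rw [hHa]
    have hptwise : ∀ b ∈ Set.Icc x T, 1 - ⟪g a, g b⟫ ≤ |F b - F a| := by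
      intro b hb
      have h2 : ‖g a - g b‖ ^ 2 = 2 - 2 * ⟪g a, g b⟫ := by
        rw [norm_sub_sq_real, hgu a, hgu b]; ring
      have h3 : ‖g a - g b‖ ≤ 2 := by
        calc ‖g a - g b‖ ≤ ‖g a‖ + ‖g b‖ := norm_sub_le _ _
        _ = 2 := by rw [hgu a, hgu b]; norm_num
      have h4 : ‖g a - g b‖ ≤ |F b - F a| := by
        rcases le_total a b with hab | hab
        · have h9 : (0:ℝ) ≤ ∫ z in a..b, f z :=
            intervalIntegral.integral_nonneg hab (fun u _ => hf0 u)
          have h10 : |F b - F a| = F b - F a := by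
            apply abs_of_nonneg; rw [hFsub a b]; exact h9
          rw [h10, hFsub a b]
          calc ‖g a - g b‖ = ‖g b - g a‖ := by rw [norm_sub_rev]
          _ ≤ ∫ z in a..b, f z := hF a b ha.1 hab hb.2
        · have h9 : (0:ℝ) ≤ ∫ z in b..a, f z :=
            intervalIntegral.integral_nonneg hab (fun u _ => hf0 u)
          have h10 : |F b - F a| = F a - F b := by
            rw [abs_sub_comm]; apply abs_of_nonneg; rw [hFsub b a]; exact h9
          rw [h10, hFsub b a]
          exact hF b a hb.1 hab ha.2
      nlinarith [h2, h3, h4, mul_nonneg (norm_nonneg (g a - g b)) (sub_nonneg.2 h3)]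
    have hmono : (∫ b in x..T, (1 - ⟪g a, g b⟫)) ≤ ∫ b in x..T, |F b - F a| :=
      intervalIntegral.integral_mono_on hxT
        ((continuous_const.sub (continuous_const.inner hg)).intervalIntegrable x T)
        (((hFc.sub continuous_const).abs).intervalIntegrable x T) hptwise
    refine hmono.trans ?_
    have hsplit : (∫ b in x..T, |F b - F a|) =
        (∫ b in x..a, |F b - F a|) + ∫ b in a..T, |F b - F a| :=
      (intervalIntegral.integral_add_adjacent_intervals
        (((hFc.sub continuous_const).abs).intervalIntegrable x a)
        (((hFc.sub continuous_const).abs).intervalIntegrable a T)).symm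
    have h5 : (∫ b in x..a, |F b - F a|) = ∫ b in x..a, (F a - F b) := by
      apply intervalIntegral.integral_congr
      intro b hb
      rw [Set.uIcc_of_le ha.1] at hb
      have h7 : (0:ℝ) ≤ ∫ z in b..a, f z :=
        intervalIntegral.integral_nonneg hb.2 (fun u _ => hf0 u)
      have h8 := hFsub b a
      show |F b - F a| = F a - F b
      rw [abs_of_nonpos (by linarith : F b - F a ≤ 0)]; ring
    have h6 : (∫ b in a..T, |F b - F a|) = ∫ b in a..T, (F b - F a) := by
      apply intervalIntegral.integral_congr
      intro b hb
      rw [Set.uIcc_of_le ha.2] at hb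
      have h7 : (0:ℝ) ≤ ∫ z in a..b, f z :=
        intervalIntegral.integral_nonneg hb.1 (fun u _ => hf0 u)
      have h8 := hFsub a b
      show |F b - F a| = F b - F a
      rw [abs_of_nonneg (by linarith : (0:ℝ) ≤ F b - F a)]
    rw [hsplit, h5, h6,
      intervalIntegral.integral_sub intervalIntegrable_const (hFc.intervalIntegrable x a),
      intervalIntegral.integral_sub (hFc.intervalIntegrable a T) intervalIntegrable_const,
      intervalIntegral.integral_const, intervalIntegral.integral_const]
    have e1 : (∫ b in x..a, F b) = Φ a := rfl
    have e2 : (∫ b in a..T, F b) = Φ T - Φ a := (hΦsub a T).symm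
    rw [e1, e2, hK]
    simp only [smul_eq_mul, hT]
    exact le_of_eq (by ring)
  -- combine A and B
  have hAB : t ^ 2 - ‖v‖ ^ 2 ≤ ∫ a in x..T, K a := by
    rw [hA]
    exact intervalIntegral.integral_mono_on hxT
      ((continuous_const.sub (hg.inner continuous_const)).intervalIntegrable x T)
      (hKc.intervalIntegrable x T) hB
  -- integration by parts for Φ
  have hparts : (∫ a in x..T, Φ a) = t * Φ T - ∫ a in x..T, (a - x) * F a := by
    have hderiv : ∀ a ∈ Set.uIcc x T, HasDerivAt (fun s => (s - x) * Φ s)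
        (Φ a + (a - x) * F a) a := by
      intro a _
      have hΦd : HasDerivAt Φ (F a) a :=
        intervalIntegral.integral_hasDerivAt_right (hFc.intervalIntegrable x a)
          (hFc.stronglyMeasurableAtFilter volume (𝓝 a)) hFc.continuousAt
      have h9 : HasDerivAt (fun s => (s - x) * Φ s) (1 * Φ a + (id a - x) * F a) a :=
        ((hasDerivAt_id a).sub_const x).mul hΦd
      convert h9 using 1
      simp only [id_eq]
      ring
    have hint : IntervalIntegrable (fun a => Φ a + (a - x) * F a) volume x T :=
      (hΦc.add hc2).intervalIntegrable x T
    have heq := intervalIntegral.integral_eq_sub_of_hasDerivAt hderiv hint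
    rw [intervalIntegral.integral_add (hΦc.intervalIntegrable x T)
      (hc2.intervalIntegrable x T)] at heq
    have h10 : (T - x) * Φ T - (x - x) * Φ x = t * Φ T := by rw [hTx]; ring
    rw [h10] at heq
    linarith
  -- linearity
  have hlin : (∫ a in x..T, (2 * (a - x) - t) * F a) =
      2 * (∫ a in x..T, (a - x) * F a) - t * Φ T := by
    have h11 : ∀ a : ℝ, (2 * (a - x) - t) * F a = 2 * ((a - x) * F a) - t * F a :=
      fun a => by ring
    simp_rw [h11]
    rw [intervalIntegral.integral_sub (show IntervalIntegrable (fun a => 2 * ((a - x) * F a)) volume x T from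
        (continuous_const.mul hc2).intervalIntegrable x T)
      (show IntervalIntegrable (fun a => t * F a) volume x T from
        (continuous_const.mul hFc).intervalIntegrable x T),
      intervalIntegral.integral_const_mul, intervalIntegral.integral_const_mul]
  -- ∫ K = 2 * I₁
  have hD : (∫ a in x..T, K a) = 2 * ∫ a in x..T, (2 * (a - x) - t) * F a := by
    have h12 : (∫ a in x..T, K a) = (∫ a in x..T, (2 * (a - x) - t) * F a)
        + ∫ a in x..T, (Φ T - 2 * Φ a) := by
      rw [← intervalIntegral.integral_add (hc1.intervalIntegrable x T)
        (show IntervalIntegrable (fun a => Φ T - 2 * Φ a) volume x T from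
          (continuous_const.sub (continuous_const.mul hΦc)).intervalIntegrable x T)]
    have h13 : (∫ a in x..T, (Φ T - 2 * Φ a)) = t * Φ T - 2 * ∫ a in x..T, Φ a := by
      rw [intervalIntegral.integral_sub intervalIntegrable_const
        (show IntervalIntegrable (fun a => 2 * Φ a) volume x T from
          (continuous_const.mul hΦc).intervalIntegrable x T),
        intervalIntegral.integral_const, intervalIntegral.integral_const_mul, hTx, smul_eq_mul]
    rw [h12, h13, hparts]
    linarith [hlin]
  -- Step E : the explicit bound
  set m := x + t / 2 with hm
  have hxm : x ≤ m := by rw [hm]; linarith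
  have hmT : m ≤ T := by rw [hm, hT]; linarith
  have hmx : m - x = t / 2 := by rw [hm]; ring
  have hcq : Continuous fun a : ℝ => (2 * (a - x) - t) * (2 * (a - x) * M) :=
    ((continuous_const.mul (continuous_id.sub continuous_const)).sub continuous_const).mul
      ((continuous_const.mul (continuous_id.sub continuous_const)).mul continuous_const)
  have hEsplit : (∫ a in x..T, (2 * (a - x) - t) * F a) =
      (∫ a in x..m, (2 * (a - x) - t) * F a) + ∫ a in m..T, (2 * (a - x) - t) * F a :=
    (intervalIntegral.integral_add_adjacent_intervals (hc1.intervalIntegrable x m)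
      (hc1.intervalIntegrable m T)).symm
  have hE1 : (∫ a in x..m, (2 * (a - x) - t) * F a) ≤ 0 := by
    have h14 : (∫ a in x..m, (2 * (a - x) - t) * F a) ≤ ∫ a in x..m, (0:ℝ) := by
      apply intervalIntegral.integral_mono_on hxm (hc1.intervalIntegrable x m)
        intervalIntegrable_const
      intro a ha
      have h15 : 2 * (a - x) - t ≤ 0 := by
        have := ha.2; rw [hm] at this; linarith
      exact mul_nonpos_of_nonpos_of_nonneg h15 (hF0 a ha.1)
    simpa using h14
  have hE2 : (∫ a in m..T, (2 * (a - x) - t) * F a) ≤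
      ∫ a in m..T, (2 * (a - x) - t) * (2 * (a - x) * M) := by
    apply intervalIntegral.integral_mono_on hmT (hc1.intervalIntegrable m T)
      (hcq.intervalIntegrable m T)
    intro a ha
    have h16 : 0 ≤ 2 * (a - x) - t := by
      have := ha.1; rw [hm] at this; linarith
    exact mul_le_mul_of_nonneg_left (hFle a (hxm.trans ha.1) ha.2) h16
  have hE3 : (∫ a in m..T, (2 * (a - x) - t) * (2 * (a - x) * M)) = 5 / 12 * M * t ^ 3 := by
    have hderiv : ∀ a ∈ Set.uIcc m T,
        HasDerivAt (fun s => M * (4 * (s - x) ^ 3 / 3 - t * (s - x) ^ 2))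
          ((2 * (a - x) - t) * (2 * (a - x) * M)) a := by
      intro a _
      have h1 : HasDerivAt (fun s : ℝ => s - x) 1 a := (hasDerivAt_id a).sub_const x
      have h2 : HasDerivAt (fun s => M * (4 * (s - x) ^ 3 / 3 - t * (s - x) ^ 2))
          (M * (4 * (↑3 * (a - x) ^ 2 * 1) / 3 - t * (↑2 * (a - x) ^ 1 * 1))) a :=
        HasDerivAt.const_mul M ((((h1.pow 3).const_mul 4).div_const 3).sub
          ((h1.pow 2).const_mul t))
      convert h2 using 1
      push_cast
      ring
    rw [intervalIntegral.integral_eq_sub_of_hasDerivAt hderiv (hcq.intervalIntegrable m T)]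
    rw [hTx, hmx]
    ring
  -- conclude
  have hfinal : t ^ 2 - ‖v‖ ^ 2 ≤ 5 / 6 * M * t ^ 3 := by
    have := hAB
    rw [hD, hEsplit] at this
    linarith [hE1, hE2, hE3]
  have hcube : 0 ≤ M * t ^ 3 := mul_nonneg hM0 (pow_nonneg ht 3)
  nlinarith [hfinal, hcube]

end Core

/-- Let `γ ∈ H²(𝕋¹;ℝ³)` have unit speed, and let `κ*_γ(x)` be the curvature maximal
function `sup_{0<ℓ<π}(1/2ℓ)∫_{x-ℓ}^{x+ℓ}|γ''|`.  With `δ(x,y)` defined by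
`|γ(x)-γ(y)|² = (1-δ(x,y))ϑ(x-y)²`, one has `δ(x,y) ≤ ϑ(x-y)·κ*_γ(x)`; equivalently,
for any `M` bounding all the averages `(1/2ℓ)∫_{x-ℓ}^{x+ℓ}|γ''|` with `0 < ℓ < π`,
`ϑ(x-y)² - |γ(x)-γ(y)|² ≤ ϑ(x-y)·M·ϑ(x-y)²`. -/
theorem stmt6 (γ γ' γ'' : ℝ → EuclideanSpace ℝ (Fin 3))
    (hper : Function.Periodic γ (2 * π))
    (hper' : Function.Periodic γ' (2 * π))
    (hper'' : Function.Periodic γ'' (2 * π))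
    (hInt' : ∀ a b : ℝ, IntervalIntegrable γ' volume a b)
    (hInt'' : ∀ a b : ℝ, IntervalIntegrable γ'' volume a b)
    (hFTC : ∀ a b : ℝ, γ b - γ a = ∫ x in a..b, γ' x)
    (hFTC' : ∀ a b : ℝ, γ' b - γ' a = ∫ x in a..b, γ'' x)
    (hL2 : MemLp γ'' 2 (volume.restrict (Set.Ioc (-π) π)))
    (hspeed : ∀ x, ‖γ' x‖ = 1) :
    ∀ x y M : ℝ,
      (∀ ℓ : ℝ, 0 < ℓ → ℓ < π →
        (1 / (2 * ℓ)) * ∫ z in (x - ℓ)..(x + ℓ), ‖γ'' z‖ ≤ M) →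
      vartheta (x - y) ^ 2 - ‖γ x - γ y‖ ^ 2 ≤
        vartheta (x - y) * M * vartheta (x - y) ^ 2 := by
  intro x y M hMavg
  have hπ : (0:ℝ) < π := pi_pos
  -- continuity of γ'
  have hcont' : Continuous γ' := by
    have h1 : Continuous fun b => γ' 0 + ∫ s in (0:ℝ)..b, γ'' s :=
      continuous_const.add (intervalIntegral.continuous_primitive hInt'' 0)
    have h2 : (fun b => γ' 0 + ∫ s in (0:ℝ)..b, γ'' s) = γ' := by
      funext b
      rw [← hFTC' 0 b]
      abel
    rw [← h2]; exact h1
  have hfi0 : ∀ a b : ℝ, IntervalIntegrable (fun z => ‖γ'' z‖) volume a b :=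
    fun a b => (hInt'' a b).norm
  -- M is nonnegative
  have hM0 : 0 ≤ M := by
    have h1 := hMavg (π/2) (by linarith) (by linarith)
    have h2 : 0 ≤ ∫ z in (x - π/2)..(x + π/2), ‖γ'' z‖ :=
      intervalIntegral.integral_nonneg (by linarith) (fun u _ => norm_nonneg _)
    have h3 : 0 ≤ (1 / (2 * (π/2))) * ∫ z in (x - π/2)..(x + π/2), ‖γ'' z‖ := by
      apply mul_nonneg (by positivity) h2
    linarith
  -- the centered bound, for all radii up to π
  have hMlt : ∀ r : ℝ, 0 < r → r < π →
      (∫ z in (x - r)..(x + r), ‖γ'' z‖) ≤ 2 * r * M := by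
    intro r h1 h2
    have h3 := hMavg r h1 h2
    have h4 : (∫ z in (x - r)..(x + r), ‖γ'' z‖)
        = 2 * r * ((1 / (2 * r)) * ∫ z in (x - r)..(x + r), ‖γ'' z‖) := by
      field_simp
    rw [h4]
    exact mul_le_mul_of_nonneg_left h3 (by linarith)
  have hM' : ∀ r : ℝ, 0 ≤ r → r ≤ π →
      (∫ z in (x - r)..(x + r), ‖γ'' z‖) ≤ 2 * r * M := by
    intro r hr0 hrπ
    rcases eq_or_lt_of_le hr0 with h | h
    · rw [← h]; norm_num
    rcases lt_or_eq_of_le hrπ with h2 | h2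
    · exact hMlt r h h2
    · subst h2
      set G : ℝ → ℝ := fun s => ∫ z in x..s, ‖γ'' z‖ with hG
      have hGc : Continuous G := intervalIntegral.continuous_primitive hfi0 x
      have hrepr : ∀ r : ℝ, (∫ z in (x - r)..(x + r), ‖γ'' z‖) = G (x + r) - G (x - r) :=
        fun r => (intervalIntegral.integral_interval_sub_left
          (hfi0 x (x + r)) (hfi0 x (x - r))).symm
      have htend : Tendsto (fun r : ℝ => G (x + r) - G (x - r)) (𝓝[<] π)
          (𝓝 (G (x + π) - G (x - π))) := by
        have hc : Continuous fun r : ℝ => G (x + r) - G (x - r) :=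
          (hGc.comp (continuous_const.add continuous_id)).sub
            (hGc.comp (continuous_const.sub continuous_id))
        exact hc.continuousAt.tendsto.mono_left nhdsWithin_le_nhds
      have hev : ∀ᶠ r in 𝓝[<] π, G (x + r) - G (x - r) ≤ 2 * π * M := by
        filter_upwards [Ioo_mem_nhdsLT_of_mem
          (show π ∈ Set.Ioc 0 π from ⟨hπ, le_refl _⟩)] with r hr
        rw [← hrepr r]
        calc (∫ z in (x - r)..(x + r), ‖γ'' z‖) ≤ 2 * r * M := hMlt r hr.1 hr.2
        _ ≤ 2 * π * M := by nlinarith [hr.2.le]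
      have := le_of_tendsto htend hev
      rw [hrepr π]
      exact this
  -- reduce y modulo 2π
  set k : ℤ := round ((x - y) / (2 * π)) with hk
  set z' : ℝ := (x - y) - 2 * π * (k : ℝ) with hz'
  set t : ℝ := vartheta (x - y) with htdef
  have htabs : t = |z'| := by rw [htdef]; unfold vartheta; rw [hz', hk]
  have ht0 : 0 ≤ t := by rw [htabs]; exact abs_nonneg _
  have htπ : t ≤ π := by
    have h1 : |(x - y) / (2 * π) - (k:ℝ)| ≤ 1 / 2 := abs_sub_round _
    have h2 : z' = 2 * π * ((x - y) / (2 * π) - (k:ℝ)) := by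
      rw [hz']; field_simp
    rw [htabs, h2, abs_mul, abs_of_pos (by linarith : (0:ℝ) < 2 * π)]
    nlinarith
  have hyz : γ (x - z') = γ y := by
    have h1 : x - z' = y + (k : ℝ) * (2 * π) := by rw [hz']; ring
    rw [h1]
    exact (hper.int_mul k) y
  -- goal already in terms of t
  rcases le_or_gt 0 z' with hsgn | hsgn
  · -- z' ≥ 0 : γ y = γ (x - t), reflected case
    have htz : t = z' := by rw [htabs]; exact abs_of_nonneg hsgn
    have hy' : γ y = γ (x - t) := by rw [htz, ← hyz]
    set g : ℝ → EuclideanSpace ℝ (Fin 3) := fun s => γ' (2 * x - s) with hg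
    set f : ℝ → ℝ := fun z => ‖γ'' (2 * x - z)‖ with hf
    have hnorm : γ x - γ y = ∫ s in x..(x + t), g s := by
      rw [hg]
      simp only
      rw [intervalIntegral.integral_comp_sub_left γ' (2 * x)]
      rw [show 2 * x - (x + t) = x - t from by ring, show 2 * x - x = x from by ring]
      rw [← hFTC (x - t) x, hy']
    rw [hnorm]
    apply core_est g f x t M ht0 hM0
        (hcont'.comp (continuous_const.sub continuous_id)) (fun s => hspeed _)
    · intro a b
      have h1 := ((hInt'' (2 * x - a) (2 * x - b)).norm).comp_sub_left (2 * x)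
      simpa using h1
    · intro z; exact norm_nonneg _
    · intro a b hxa hab hbT
      have h1 : g b - g a = -(γ' (2 * x - a) - γ' (2 * x - b)) := by
        rw [hg]; simp only [neg_sub]
      rw [h1, norm_neg, hFTC' (2 * x - b) (2 * x - a), hf]
      rw [intervalIntegral.integral_comp_sub_left (fun u => ‖γ'' u‖) (2 * x)]
      exact intervalIntegral.norm_integral_le_integral_norm (by linarith)
    · intro r hr0 hrt
      rw [hf]
      rw [intervalIntegral.integral_comp_sub_left (fun u => ‖γ'' u‖) (2 * x)]
      rw [show 2 * x - (x + r) = x - r from by ring, show 2 * x - (x - r) = x + r from by ring]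
      exact hM' r hr0 (hrt.trans htπ)
  · -- z' < 0 : γ y = γ (x + t), direct case
    have htz : t = -z' := by rw [htabs]; exact abs_of_neg hsgn
    have hy' : γ y = γ (x + t) := by
      rw [htz, show x + -z' = x - z' from by ring, hyz]
    have hnorm : ‖γ x - γ y‖ = ‖∫ s in x..(x + t), γ' s‖ := by
      rw [← hFTC x (x + t), hy', norm_sub_rev]
    rw [hnorm]
    apply core_est γ' (fun z => ‖γ'' z‖) x t M ht0 hM0 hcont' hspeed hfi0
      (fun z => norm_nonneg _)
    · intro a b hxa hab hbT
      rw [hFTC' a b]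
      exact intervalIntegral.norm_integral_le_integral_norm hab
    · intro r hr0 hrt
      exact hM' r hr0 (hrt.trans htπ)
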